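/- Let n be a positive integer, let M be a symmetric positive definite n×n real matrix, let a < b be real numbers, and let w : [a,b] → ℝⁿ be a continuous function. Then (∫_a^b ∫_θ^b w(s) ds dθ)ᵀ M (∫_a^b ∫_θ^b w(s) ds dθ) ≤ ((b − a)²/2) · ∫_a^b ∫_θ^b w(s)ᵀ M w(s) ds dθ. -/

import Mathlib

open Matrix intervalIntegral MeasureTheory

/-- Fubini-type swap for iterated integrals of a continuous function. -/
lemma swap_iterated {E : Type*} [NormedAddCommGroup E] [NormedSpace ℝ E] [CompleteSpace E]
    (f : ℝ → E) (hf : Continuous f) (a b : ℝ) :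
    (∫ θ in a..b, ∫ s in θ..b, f s) = ∫ s in a..b, (s - a) • f s := by
  set F : ℝ → E := fun t => ∫ s in a..t, f s with hFdef
  have hFderiv : ∀ t : ℝ, HasDerivAt F (f t) t := fun t =>
    (hf.integral_hasStrictDerivAt a t).hasDerivAt
  have hFcont : Continuous F :=
    continuous_iff_continuousAt.mpr fun t => (hFderiv t).differentiableAt.continuousAt
  have hFint : IntervalIntegrable F volume a b := hFcont.intervalIntegrable a b
  -- LHS
  have hinner : ∀ θ : ℝ, (∫ s in θ..b, f s) = F b - F θ := fun θ =>
    (integral_interval_sub_left (hf.intervalIntegrable a b) (hf.intervalIntegrable a θ)).symm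
  have hL : (∫ θ in a..b, ∫ s in θ..b, f s) = (b - a) • F b - ∫ θ in a..b, F θ := by
    rw [show (fun θ => ∫ s in θ..b, f s) = fun θ => F b - F θ from funext hinner]
    rw [intervalIntegral.integral_sub (intervalIntegrable_const) hFint,
      intervalIntegral.integral_const]
  -- RHS via FTC on G
  set G : ℝ → E := fun t => (t - a) • F t - ∫ u in a..t, F u with hGdef
  have hGderiv : ∀ t : ℝ, HasDerivAt G ((t - a) • f t) t := by
    intro t
    have h1 : HasDerivAt (fun t : ℝ => (t - a) • F t) ((t - a) • f t + (1:ℝ) • F t) t := by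
      exact (((hasDerivAt_id t).sub_const a).smul (hFderiv t)).congr_deriv (by simp)
    have h2 : HasDerivAt (fun t : ℝ => ∫ u in a..t, F u) (F t) t :=
      (hFcont.integral_hasStrictDerivAt a t).hasDerivAt
    have := h1.sub h2
    exact this.congr_deriv (by simp)
  have hR : (∫ s in a..b, (s - a) • f s) = G b - G a := by
    refine intervalIntegral.integral_eq_sub_of_hasDerivAt (fun t _ => hGderiv t) ?_
    exact ((continuous_id.sub continuous_const).smul hf).intervalIntegrable a b
  rw [hL, hR]
  simp [hGdef]

lemma weighted_cs (a b : ℝ) (hab : a ≤ b) (h : ℝ → ℝ) (hh : Continuous h) :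
    (∫ s in a..b, (s - a) * h s) ^ 2 ≤
      (∫ s in a..b, (s - a)) * ∫ s in a..b, (s - a) * (h s) ^ 2 := by
  have hρ : Continuous (fun s : ℝ => s - a) := continuous_id.sub continuous_const
  have hI : (∫ s in a..b, (s - a)) = (b - a) ^ 2 / 2 := by
    rw [intervalIntegral.integral_sub (intervalIntegrable_id) (intervalIntegrable_const),
      integral_id, intervalIntegral.integral_const, smul_eq_mul]
    ring
  rcases eq_or_lt_of_le hab with rfl | hab'
  · simp
  set I : ℝ := (b - a) ^ 2 / 2 with hIdef
  have hIpos : 0 < I := by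
    have hba : 0 < b - a := sub_pos.mpr hab'
    positivity
  set J : ℝ := ∫ s in a..b, (s - a) * h s with hJ
  set K : ℝ := ∫ s in a..b, (s - a) * (h s) ^ 2 with hK
  set c : ℝ := J / I with hc
  have int1 : IntervalIntegrable (fun s => (s - a) * (h s) ^ 2) volume a b :=
    (hρ.mul (hh.pow 2)).intervalIntegrable a b
  have int2 : IntervalIntegrable (fun s => (2 * c) * ((s - a) * h s)) volume a b :=
    (continuous_const.mul (hρ.mul hh)).intervalIntegrable a b
  have int3 : IntervalIntegrable (fun s => c ^ 2 * (s - a)) volume a b :=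
    (continuous_const.mul hρ).intervalIntegrable a b
  have expand : (∫ s in a..b, (s - a) * (h s - c) ^ 2) = K - 2 * c * J + c ^ 2 * I := by
    have : (fun s : ℝ => (s - a) * (h s - c) ^ 2) =
        fun s => (s - a) * (h s) ^ 2 - (2 * c) * ((s - a) * h s) + c ^ 2 * (s - a) := by
      funext s; ring
    rw [this, intervalIntegral.integral_add (int1.sub int2) int3,
      intervalIntegral.integral_sub int1 int2,
      intervalIntegral.integral_const_mul, intervalIntegral.integral_const_mul, hI]
  have hnn : 0 ≤ (∫ s in a..b, (s - a) * (h s - c) ^ 2) := by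
    refine intervalIntegral.integral_nonneg hab fun u hu => ?_
    have : 0 ≤ u - a := by linarith [hu.1]
    positivity
  rw [expand] at hnn
  have hcI : c * I = J := div_mul_cancel₀ J hIpos.ne'
  rw [hI]
  nlinarith [mul_nonneg hIpos.le hnn]

/-- Jensen's inequality for iterated vector-valued integrals with a symmetric
positive definite weight matrix `M`. -/
theorem jensen_double_integral_quadratic_form
    (n : ℕ) (hn : 0 < n) (M : Matrix (Fin n) (Fin n) ℝ)
    (hMsymm : M.IsSymm) (hMpd : M.PosDef)
    (a b : ℝ) (hab : a < b)
    (w : ℝ → (Fin n → ℝ)) (hw : ContinuousOn w (Set.Icc a b)) :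
    (∫ θ in a..b, ∫ s in θ..b, w s) ⬝ᵥ (M *ᵥ (∫ θ in a..b, ∫ s in θ..b, w s)) ≤
      ((b - a) ^ 2 / 2) * ∫ θ in a..b, ∫ s in θ..b, (w s) ⬝ᵥ (M *ᵥ w s) := by
  have hab' : a ≤ b := hab.le
  -- continuous extension of w
  set W : ℝ → (Fin n → ℝ) := fun t => (Set.Icc a b).restrict w (Set.projIcc a b hab' t)
    with hWdef
  have hWcont : Continuous W := hw.restrict.comp continuous_projIcc
  have hWeq : ∀ t ∈ Set.Icc a b, W t = w t := by
    intro t ht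
    simp [hWdef, Set.projIcc_of_mem hab' ht, Set.restrict_apply]
    rfl
  -- replace w by W in both iterated integrals
  have hrepl1 : (∫ θ in a..b, ∫ s in θ..b, w s) = ∫ θ in a..b, ∫ s in θ..b, W s := by
    apply intervalIntegral.integral_congr
    intro θ hθ
    rw [Set.uIcc_of_le hab'] at hθ
    apply intervalIntegral.integral_congr
    intro s hs
    rw [Set.uIcc_of_le hθ.2] at hs
    exact (hWeq s ⟨le_trans hθ.1 hs.1, hs.2⟩).symm
  have hrepl2 : (∫ θ in a..b, ∫ s in θ..b, (w s) ⬝ᵥ (M *ᵥ w s)) =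
      ∫ θ in a..b, ∫ s in θ..b, (W s) ⬝ᵥ (M *ᵥ W s) := by
    apply intervalIntegral.integral_congr
    intro θ hθ
    rw [Set.uIcc_of_le hab'] at hθ
    apply intervalIntegral.integral_congr
    intro s hs
    rw [Set.uIcc_of_le hθ.2] at hs
    show w s ⬝ᵥ (M *ᵥ w s) = W s ⬝ᵥ (M *ᵥ W s)
    rw [hWeq s ⟨le_trans hθ.1 hs.1, hs.2⟩]
  rw [hrepl1, hrepl2]
  -- square root of M
  open scoped MatrixOrder in
  set A : Matrix (Fin n) (Fin n) ℝ := CFC.sqrt M with hAdef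
  open scoped MatrixOrder in
  have hApsd : A.PosSemidef := (CFC.sqrt_nonneg M).posSemidef
  have hAsym : Aᵀ = A := by
    ext i j
    have := congrFun (congrFun hApsd.1 i) j
    simpa [Matrix.conjTranspose_apply] using this
  open scoped MatrixOrder in
  have hAA : A * A = M := CFC.sqrt_mul_sqrt_self M hMpd.posSemidef.nonneg
  have hquad : ∀ v : Fin n → ℝ, v ⬝ᵥ (M *ᵥ v) = (A *ᵥ v) ⬝ᵥ (A *ᵥ v) := by
    intro v
    rw [← hAA, ← Matrix.mulVec_mulVec, Matrix.dotProduct_mulVec]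
    congr 1
    rw [← Matrix.vecMul_transpose, hAsym]
  -- the linear map x ↦ A *ᵥ x as a continuous linear map
  set L : (Fin n → ℝ) →L[ℝ] (Fin n → ℝ) :=
    LinearMap.toContinuousLinearMap (Matrix.mulVecLin A) with hLdef
  have hLapp : ∀ x, L x = A *ᵥ x := fun x => rfl
  set g : ℝ → (Fin n → ℝ) := fun s => A *ᵥ W s with hgdef
  have hgcont : Continuous g := by
    have : g = fun s => L (W s) := by funext s; rw [hLapp]
    rw [this]; exact L.continuous.comp hWcont
  -- rewrite the vector integral
  have hswapW : (∫ θ in a..b, ∫ s in θ..b, W s) = ∫ s in a..b, (s - a) • W s :=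
    swap_iterated W hWcont a b
  set v : Fin n → ℝ := ∫ s in a..b, (s - a) • W s with hvdef
  have hsmulint : IntervalIntegrable (fun s => (s - a) • W s) volume a b :=
    ((continuous_id.sub continuous_const).smul hWcont).intervalIntegrable a b
  have hAv : A *ᵥ v = ∫ s in a..b, (s - a) • g s := by
    rw [← hLapp, ← L.intervalIntegral_comp_comm hsmulint]
    apply intervalIntegral.integral_congr
    intro s _
    show L ((s - a) • W s) = (s - a) • g s
    rw [L.map_smul, hLapp]
  -- components
  have hgsmulint : IntervalIntegrable (fun s => (s - a) • g s) volume a b :=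
    ((continuous_id.sub continuous_const).smul hgcont).intervalIntegrable a b
  have hcomp : ∀ i : Fin n, (A *ᵥ v) i = ∫ s in a..b, (s - a) * g s i := by
    intro i
    have hproj := (ContinuousLinearMap.proj (R := ℝ) (φ := fun _ : Fin n => ℝ) i
      ).intervalIntegral_comp_comm hgsmulint
    calc (A *ᵥ v) i
        = (ContinuousLinearMap.proj (R := ℝ) (φ := fun _ : Fin n => ℝ) i)
          (∫ s in a..b, (s - a) • g s) := by rw [hAv]; rfl
      _ = ∫ s in a..b, (s - a) * g s i := by
          rw [← hproj]
          apply intervalIntegral.integral_congr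
          intro s _
          show ((s - a) • g s) i = (s - a) * g s i
          simp
  -- pointwise continuity of components of g
  have hgi : ∀ i : Fin n, Continuous fun s => g s i := fun i =>
    (continuous_apply i).comp hgcont
  -- the value of ∫ (s-a)
  have hI : (∫ s in a..b, (s - a)) = (b - a) ^ 2 / 2 := by
    rw [intervalIntegral.integral_sub intervalIntegrable_id intervalIntegrable_const,
      integral_id, intervalIntegral.integral_const, smul_eq_mul]
    ring
  -- main chain
  rw [hswapW, hquad v]
  have hCS : ∀ i : Fin n, ((A *ᵥ v) i) ^ 2 ≤
      ((b - a) ^ 2 / 2) * ∫ s in a..b, (s - a) * (g s i) ^ 2 := by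
    intro i
    rw [hcomp i, ← hI]
    exact weighted_cs a b hab' _ (hgi i)
  calc (A *ᵥ v) ⬝ᵥ (A *ᵥ v) = ∑ i, ((A *ᵥ v) i) ^ 2 := by
        simp [dotProduct, sq]
    _ ≤ ∑ i, ((b - a) ^ 2 / 2) * ∫ s in a..b, (s - a) * (g s i) ^ 2 :=
        Finset.sum_le_sum fun i _ => hCS i
    _ = ((b - a) ^ 2 / 2) * ∑ i, ∫ s in a..b, (s - a) * (g s i) ^ 2 := by
        rw [Finset.mul_sum]
    _ = ((b - a) ^ 2 / 2) * ∫ s in a..b, ∑ i, (s - a) * (g s i) ^ 2 := by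
        rw [intervalIntegral.integral_finset_sum]
        intro i _
        exact ((continuous_id.sub continuous_const).mul ((hgi i).pow 2)).intervalIntegrable a b
    _ = ((b - a) ^ 2 / 2) * ∫ s in a..b, (s - a) • ((W s) ⬝ᵥ (M *ᵥ W s)) := by
        congr 1
        apply intervalIntegral.integral_congr
        intro s _
        show (∑ i, (s - a) * g s i ^ 2) = (s - a) • (W s ⬝ᵥ (M *ᵥ W s))
        rw [hquad (W s), smul_eq_mul]
        simp [dotProduct, hgdef, sq, Finset.mul_sum]
    _ = ((b - a) ^ 2 / 2) * ∫ θ in a..b, ∫ s in θ..b, (W s) ⬝ᵥ (M *ᵥ W s) := by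
        congr 1
        refine (swap_iterated _ ?_ a b).symm
        have : (fun s => (W s) ⬝ᵥ (M *ᵥ W s)) = fun s => ∑ i, (g s i) ^ 2 := by
          funext s
          rw [hquad (W s)]
          simp [dotProduct, sq, hgdef]
        rw [this]
        exact continuous_finset_sum _ fun i _ => (hgi i).pow 2
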